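/- Let X and Y be independent random variables, each uniformly distributed on a 3-element alphabet, and let Z = 1 if X = Y and Z = 0 otherwise. Let M be any finite-valued random variable on the same probability space with I(X ; Y | M) = 0, H(Z | (M, X)) = 0 and H(Z | (M, Y)) = 0. Then I(X ; M | Y) + I(Y ; M | X) ≥ 2 log 3 − (2/3) log 2. -/

import Mathlib

open MeasureTheory ProbabilityTheory Real
open scoped ENNReal

/-- The probability that the random variable `X` takes the value `x`. -/
noncomputable def pm {Ω S : Type*} [MeasurableSpace Ω] (μ : Measure Ω) (X : Ω → S) (x : S) : ℝ :=
  (μ (X ⁻¹' {x})).toReal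

/-- Shannon entropy (with natural logarithm) of a finite-valued random variable. -/
noncomputable def entH {Ω S : Type*} [MeasurableSpace Ω] [Fintype S]
    (μ : Measure Ω) (X : Ω → S) : ℝ :=
  ∑ x : S, Real.negMulLog (pm μ X x)

/-- Conditional entropy `H(X | Y)`. -/
noncomputable def condEnt {Ω S T : Type*} [MeasurableSpace Ω] [Fintype S] [Fintype T]
    (μ : Measure Ω) (X : Ω → S) (Y : Ω → T) : ℝ :=
  entH μ (fun ω => (X ω, Y ω)) - entH μ Y

/-- Mutual information `I(X ; Y)`. -/
noncomputable def mutInf {Ω S T : Type*} [MeasurableSpace Ω] [Fintype S] [Fintype T]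
    (μ : Measure Ω) (X : Ω → S) (Y : Ω → T) : ℝ :=
  entH μ X + entH μ Y - entH μ (fun ω => (X ω, Y ω))

/-- Conditional mutual information `I(X ; Y | Z)`. -/
noncomputable def condMutInf {Ω S T U : Type*} [MeasurableSpace Ω] [Fintype S] [Fintype T]
    [Fintype U] (μ : Measure Ω) (X : Ω → S) (Y : Ω → T) (Z : Ω → U) : ℝ :=
  entH μ (fun ω => (X ω, Z ω)) + entH μ (fun ω => (Y ω, Z ω))
    - entH μ (fun ω => ((X ω, Y ω), Z ω)) - entH μ Z

/-! ### Auxiliary analytic lemmas -/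

lemma binEnt_le (a b : ℝ) (ha : 0 ≤ a) (hb : 0 ≤ b) (hab : a + b = 1) :
    negMulLog a + negMulLog b ≤ Real.log 2 := by
  have hlog2 : 0 < Real.log 2 := Real.log_pos (by norm_num)
  rcases eq_or_lt_of_le ha with h0 | ha'
  · have hb1 : b = 1 := by linarith
    simp [← h0, hb1, Real.negMulLog_zero, Real.negMulLog_one]
    linarith
  rcases eq_or_lt_of_le hb with h0 | hb'
  · have ha1 : a = 1 := by linarith
    simp [← h0, ha1, Real.negMulLog_zero, Real.negMulLog_one]
    linarith
  have key : ∀ x : ℝ, 0 < x → negMulLog x ≤ x * Real.log 2 + 1/2 - x := by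
    intro x hx
    have h := Real.log_le_sub_one_of_pos (show (0:ℝ) < 1/(2*x) by positivity)
    have hrw : Real.log (1/(2*x)) = -(Real.log 2 + Real.log x) := by
      rw [one_div, Real.log_inv, Real.log_mul (by norm_num) (ne_of_gt hx)]
    rw [hrw] at h
    have h2 := mul_le_mul_of_nonneg_left h hx.le
    have hxx : x * (1/(2*x) - 1) = 1/2 - x := by field_simp
    rw [hxx] at h2
    simp only [Real.negMulLog]
    nlinarith
  have k1 := key a ha'
  have k2 := key b hb'
  nlinarith

lemma ent_of_card_le_one {A : Type*} [Fintype A] [DecidableEq A] (r : A → ℝ)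
    (hr : ∀ a, 0 ≤ r a) (hr1 : ∑ a, r a = 1)
    (hcard : (Finset.univ.filter (fun a => r a ≠ 0)).card ≤ 1) :
    ∑ a, negMulLog (r a) = 0 := by
  have hne : (Finset.univ.filter (fun a => r a ≠ 0)).Nonempty := by
    by_contra h
    rw [Finset.not_nonempty_iff_eq_empty, Finset.filter_eq_empty_iff] at h
    have : ∑ a, r a = 0 := Finset.sum_eq_zero (fun a _ => by
      have := h (Finset.mem_univ a); simpa using this)
    rw [hr1] at this; norm_num at this
  obtain ⟨a, ha⟩ := hne
  have hzero : ∀ b, b ≠ a → r b = 0 := by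
    intro b hb
    by_contra hb0
    have hbmem : b ∈ Finset.univ.filter (fun a => r a ≠ 0) := by simp [hb0]
    have : ({a, b} : Finset A).card ≤ 1 := le_trans (Finset.card_le_card (by
      intro x hx; simp at hx; rcases hx with h | h <;> simp [h]
      · simpa using ha
      · exact hb0)) hcard
    simp [Finset.card_insert_of_notMem, hb.symm] at this
  have hra : r a = 1 := by
    rw [← hr1, Fintype.sum_eq_single a hzero]
  apply Finset.sum_eq_zero
  intro b _
  rcases eq_or_ne b a with rfl | hb
  · simp [hra, Real.negMulLog_one]
  · simp [hzero b hb, Real.negMulLog_zero]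

lemma ent_of_card_le_two {A : Type*} [Fintype A] [DecidableEq A] (r : A → ℝ)
    (hr : ∀ a, 0 ≤ r a) (hr1 : ∑ a, r a = 1)
    (hcard : (Finset.univ.filter (fun a => r a ≠ 0)).card ≤ 2) :
    ∑ a, negMulLog (r a) ≤ Real.log 2 := by
  have hlog2 : 0 < Real.log 2 := Real.log_pos (by norm_num)
  rcases le_or_gt (Finset.univ.filter (fun a => r a ≠ 0)).card 1 with h1 | h1
  · rw [ent_of_card_le_one r hr hr1 h1]; linarith
  have h2 : (Finset.univ.filter (fun a => r a ≠ 0)).card = 2 := le_antisymm hcard h1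
  obtain ⟨a, b, hab, hS⟩ := Finset.card_eq_two.mp h2
  have hzero : ∀ c, c ≠ a → c ≠ b → r c = 0 := by
    intro c hca hcb
    by_contra hc0
    have : c ∈ Finset.univ.filter (fun a => r a ≠ 0) := by simp [hc0]
    rw [hS] at this; simp at this; tauto
  have hsum : r a + r b = 1 := by
    rw [← hr1]
    rw [← Finset.sum_subset (Finset.subset_univ ({a,b} : Finset A))]
    · rw [Finset.sum_pair hab]
    · intro x _ hx
      simp at hx
      exact hzero x hx.1 hx.2
  have hent : ∑ c, negMulLog (r c) = negMulLog (r a) + negMulLog (r b) := by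
    rw [← Finset.sum_pair (f := fun c => negMulLog (r c)) hab]
    rw [← Finset.sum_subset (Finset.subset_univ ({a,b} : Finset A))]
    intro x _ hx
    simp at hx
    simp [hzero x hx.1 hx.2, Real.negMulLog_zero]
  rw [hent]
  exact binEnt_le _ _ (hr a) (hr b) hsum

lemma key_lemma {A : Type*} [Fintype A] [DecidableEq A] (hA : Fintype.card A = 3)
    (r s : A → ℝ) (hr : ∀ a, 0 ≤ r a) (hs : ∀ a, 0 ≤ s a)
    (hr1 : ∑ a, r a = 1) (hs1 : ∑ a, s a = 1)
    (hdet1 : ∀ a, r a * s a = 0 ∨ ∀ b, b ≠ a → r a * s b = 0)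
    (hdet2 : ∀ a, r a * s a = 0 ∨ ∀ b, b ≠ a → r b * s a = 0) :
    ∑ a, negMulLog (r a) + ∑ a, negMulLog (s a)
      ≤ Real.log 2 * (1 - ∑ a, r a * s a) := by
  by_cases h : ∃ a, 0 < r a ∧ 0 < s a
  · obtain ⟨a, hra, hsa⟩ := h
    have hprod : r a * s a ≠ 0 := ne_of_gt (mul_pos hra hsa)
    have hs0 : ∀ b, b ≠ a → s b = 0 := by
      rcases hdet1 a with h1 | h1
      · exact absurd h1 hprod
      · intro b hb
        rcases mul_eq_zero.mp (h1 b hb) with h | h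
        · exact absurd h (ne_of_gt hra)
        · exact h
    have hr0 : ∀ b, b ≠ a → r b = 0 := by
      rcases hdet2 a with h1 | h1
      · exact absurd h1 hprod
      · intro b hb
        rcases mul_eq_zero.mp (h1 b hb) with h | h
        · exact h
        · exact absurd h (ne_of_gt hsa)
    have hra1 : r a = 1 := by rw [← hr1, Fintype.sum_eq_single a hr0]
    have hsa1 : s a = 1 := by rw [← hs1, Fintype.sum_eq_single a hs0]
    have hrs : ∑ b, r b * s b = 1 := by
      rw [Fintype.sum_eq_single a (fun b hb => by rw [hr0 b hb, zero_mul]), hra1, hsa1, mul_one]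
    have e1 : ∑ b, negMulLog (r b) = 0 := by
      apply Finset.sum_eq_zero; intro b _
      rcases eq_or_ne b a with rfl | hb
      · simp [hra1, Real.negMulLog_one]
      · simp [hr0 b hb, Real.negMulLog_zero]
    have e2 : ∑ b, negMulLog (s b) = 0 := by
      apply Finset.sum_eq_zero; intro b _
      rcases eq_or_ne b a with rfl | hb
      · simp [hsa1, Real.negMulLog_one]
      · simp [hs0 b hb, Real.negMulLog_zero]
    rw [e1, e2, hrs]; simp
  · push_neg at h
    have hdisj : ∀ a, r a = 0 ∨ s a = 0 := by
      intro a
      rcases eq_or_lt_of_le (hr a) with h0 | h0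
      · exact Or.inl h0.symm
      · exact Or.inr (le_antisymm (h a h0) (hs a))
    have hrs0 : ∑ a, r a * s a = 0 := Finset.sum_eq_zero (fun a _ => by
      rcases hdisj a with h | h <;> simp [h])
    rw [hrs0, sub_zero, mul_one]
    set Sr := Finset.univ.filter (fun a => r a ≠ 0) with hSr
    set Ss := Finset.univ.filter (fun a => s a ≠ 0) with hSs
    have hdisjS : Disjoint Sr Ss := by
      rw [Finset.disjoint_left]
      intro a haR haS
      simp [hSr] at haR; simp [hSs] at haS
      rcases hdisj a with h | h <;> tauto
    have hcards : Sr.card + Ss.card ≤ 3 := by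
      rw [← Finset.card_union_of_disjoint hdisjS]
      calc (Sr ∪ Ss).card ≤ Fintype.card A := Finset.card_le_univ _
        _ = 3 := hA
    have hrne : 1 ≤ Sr.card := by
      rw [Nat.one_le_iff_ne_zero, ne_eq, Finset.card_eq_zero, Finset.filter_eq_empty_iff]
      intro hall
      have : ∑ a, r a = 0 := Finset.sum_eq_zero (fun a _ => by
        have := hall (Finset.mem_univ a); simpa using this)
      rw [hr1] at this; norm_num at this
    have hsne : 1 ≤ Ss.card := by
      rw [Nat.one_le_iff_ne_zero, ne_eq, Finset.card_eq_zero, Finset.filter_eq_empty_iff]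
      intro hall
      have : ∑ a, s a = 0 := Finset.sum_eq_zero (fun a _ => by
        have := hall (Finset.mem_univ a); simpa using this)
      rw [hs1] at this; norm_num at this
    have hlog2 : 0 < Real.log 2 := Real.log_pos (by norm_num)
    rcases le_or_gt Sr.card 1 with h1 | h1
    · have e1 := ent_of_card_le_one r hr hr1 h1
      have e2 := ent_of_card_le_two s hs hs1 (by rw [← hSs]; omega)
      linarith
    · have hs1' : Ss.card ≤ 1 := by omega
      have e1 := ent_of_card_le_one s hs hs1 hs1'
      have e2 := ent_of_card_le_two r hr hr1 (by rw [← hSr]; omega)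
      linarith

lemma det_of_condEnt_zero {S V : Type*} [Fintype S] [Fintype V]
    (q : S → V → ℝ) (hq : ∀ s v, 0 ≤ q s v)
    (h0 : (∑ s, ∑ v, negMulLog (q s v)) - (∑ v, negMulLog (∑ s, q s v)) = 0) :
    ∀ s v, q s v = 0 ∨ q s v = ∑ s', q s' v := by
  classical
  set qV : V → ℝ := fun v => ∑ s, q s v with hqV
  have hqle : ∀ s v, q s v ≤ qV v := fun s v =>
    Finset.single_le_sum (fun s' _ => hq s' v) (Finset.mem_univ s)
  set d : S → V → ℝ := fun s v => negMulLog (q s v) + q s v * Real.log (qV v) with hd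
  have hdnn : ∀ s v, 0 ≤ d s v := by
    intro s v
    rcases eq_or_lt_of_le (hq s v) with h | h
    · simp [hd, ← h, Real.negMulLog_zero]
    · have hqVpos : 0 < qV v := lt_of_lt_of_le h (hqle s v)
      have : Real.log (q s v) ≤ Real.log (qV v) := Real.log_le_log h (hqle s v)
      simp only [hd, Real.negMulLog]
      nlinarith
  have hsum : ∑ s, ∑ v, d s v = 0 := by
    have expand : ∑ v, negMulLog (qV v) = ∑ s, ∑ v, (- (q s v * Real.log (qV v))) := by
      rw [Finset.sum_comm]
      apply Finset.sum_congr rfl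
      intro v _
      rw [Finset.sum_neg_distrib, ← Finset.sum_mul]
      simp [Real.negMulLog, hqV, neg_mul]
    simp only [hd]
    rw [Finset.sum_congr rfl (fun s _ => Finset.sum_add_distrib), Finset.sum_add_distrib]
    rw [← h0, expand]
    simp [Finset.sum_neg_distrib]
  have hzero : ∀ s v, d s v = 0 := by
    intro s v
    have h1 : ∀ s ∈ Finset.univ, (0:ℝ) ≤ ∑ v, d s v :=
      fun s _ => Finset.sum_nonneg (fun v _ => hdnn s v)
    have h2 := (Finset.sum_eq_zero_iff_of_nonneg h1).mp hsum s (Finset.mem_univ s)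
    have h3 : ∀ v ∈ Finset.univ, (0:ℝ) ≤ d s v := fun v _ => hdnn s v
    exact (Finset.sum_eq_zero_iff_of_nonneg h3).mp h2 v (Finset.mem_univ v)
  intro s v
  rcases eq_or_lt_of_le (hq s v) with h | h
  · exact Or.inl h.symm
  · right
    have hqVpos : 0 < qV v := lt_of_lt_of_le h (hqle s v)
    have hz := hzero s v
    simp only [hd, Real.negMulLog, neg_mul] at hz
    have hz' : q s v * (Real.log (qV v) - Real.log (q s v)) = 0 := by linear_combination hz
    have hlogeq : Real.log (q s v) = Real.log (qV v) := by
      rcases mul_eq_zero.mp hz' with h' | h'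
      · exact absurd h' h.ne'
      · linarith [sub_eq_zero.mp h']
    exact Real.log_injOn_pos (Set.mem_Ioi.mpr h) (Set.mem_Ioi.mpr hqVpos) hlogeq

lemma gibbs_eq {V : Type*} [Fintype V] (a b : V → ℝ) (ha : ∀ v, 0 ≤ a v) (hb : ∀ v, 0 ≤ b v)
    (hab : ∀ v, 0 < a v → 0 < b v)
    (hsum : ∑ v, b v ≤ ∑ v, a v)
    (h0 : ∑ v, (a v * Real.log (b v) - a v * Real.log (a v)) = 0) :
    ∀ v, a v = b v := by
  classical
  set e : V → ℝ := fun v => a v * Real.log (b v) - a v * Real.log (a v) with he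
  set g : V → ℝ := fun v => b v - a v with hg
  have hle : ∀ v, e v ≤ g v := by
    intro v
    rcases eq_or_lt_of_le (ha v) with h | h
    · simp [he, hg, ← h]; exact hb v
    · have hbv := hab v h
      have hlog := Real.log_le_sub_one_of_pos (show 0 < b v / a v by positivity)
      have hrw : Real.log (b v / a v) = Real.log (b v) - Real.log (a v) :=
        Real.log_div (ne_of_gt hbv) (ne_of_gt h)
      rw [hrw] at hlog
      have h2 := mul_le_mul_of_nonneg_left hlog h.le
      have h3 : a v * (b v / a v - 1) = b v - a v := by field_simp
      simp only [he, hg]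
      nlinarith
  have hgsum : ∑ v, g v ≤ 0 := by
    simp only [hg, Finset.sum_sub_distrib]
    linarith
  have hall : ∀ v, e v = g v := by
    have hnn : ∀ v ∈ Finset.univ, (0:ℝ) ≤ g v - e v := fun v _ => by linarith [hle v]
    have hsz : ∑ v, (g v - e v) = 0 := by
      apply le_antisymm
      · rw [Finset.sum_sub_distrib, h0]; simpa using hgsum
      · exact Finset.sum_nonneg hnn
    intro v
    have := (Finset.sum_eq_zero_iff_of_nonneg hnn).mp hsz v (Finset.mem_univ v)
    linarith
  intro v
  rcases eq_or_lt_of_le (ha v) with h | h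
  · have := hall v
    simp only [he, hg, ← h] at this
    simp at this
    rw [← h, this]
  · have hbv := hab v h
    have heq := hall v
    simp only [he, hg] at heq
    have hrw : Real.log (b v / a v) = Real.log (b v) - Real.log (a v) :=
      Real.log_div (ne_of_gt hbv) (ne_of_gt h)
    by_contra hne
    have hne' : b v / a v ≠ 1 := by
      intro hc
      apply hne
      field_simp at hc
      linarith
    have := Real.log_lt_sub_one_of_pos (show 0 < b v / a v by positivity) hne'
    rw [hrw] at this
    have h2 := mul_lt_mul_of_pos_left this h
    have h3 : a v * (b v / a v - 1) = b v - a v := by field_simp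
    nlinarith
lemma fact_of_cmi_zero {A B C : Type*} [Fintype A] [Fintype B] [Fintype C]
    (p : A → B → C → ℝ) (hp : ∀ x y t, 0 ≤ p x y t)
    (h0 : (∑ x, ∑ t, negMulLog (∑ y, p x y t)) + (∑ y, ∑ t, negMulLog (∑ x, p x y t))
        - (∑ x, ∑ y, ∑ t, negMulLog (p x y t)) - (∑ t, negMulLog (∑ x, ∑ y, p x y t)) = 0) :
    ∀ x y t, p x y t * (∑ x', ∑ y', p x' y' t) = (∑ y', p x y' t) * (∑ x', p x' y t) := by
  classical
  have commA : ∀ (f : A → B → C → ℝ), ∑ x, ∑ y, ∑ t, f x y t = ∑ x, ∑ t, ∑ y, f x y t :=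
    fun f => Finset.sum_congr rfl (fun x _ => Finset.sum_comm)
  have commB : ∀ (f : A → B → C → ℝ), ∑ x, ∑ y, ∑ t, f x y t = ∑ y, ∑ t, ∑ x, f x y t :=
    fun f => Finset.sum_comm.trans (Finset.sum_congr rfl (fun y _ => Finset.sum_comm))
  have commC : ∀ (f : A → B → C → ℝ), ∑ x, ∑ y, ∑ t, f x y t = ∑ t, ∑ x, ∑ y, f x y t :=
    fun f => (commA f).trans Finset.sum_comm
  have flat : ∀ (f : A → B → C → ℝ), ∑ v : A × B × C, f v.1 v.2.1 v.2.2 = ∑ x, ∑ y, ∑ t, f x y t := by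
    intro f
    rw [Fintype.sum_prod_type]
    exact Finset.sum_congr rfl fun x _ => Fintype.sum_prod_type _
  have hpx : ∀ x t, (0:ℝ) ≤ ∑ y, p x y t := fun x t => Finset.sum_nonneg (fun y _ => hp x y t)
  have hpy : ∀ y t, (0:ℝ) ≤ ∑ x, p x y t := fun y t => Finset.sum_nonneg (fun x _ => hp x y t)
  have hpt : ∀ t, (0:ℝ) ≤ ∑ x, ∑ y, p x y t := fun t => Finset.sum_nonneg (fun x _ => hpx x t)
  have hle_px : ∀ x y t, p x y t ≤ ∑ y', p x y' t :=
    fun x y t => Finset.single_le_sum (fun y' _ => hp x y' t) (Finset.mem_univ y)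
  have hle_py : ∀ x y t, p x y t ≤ ∑ x', p x' y t :=
    fun x y t => Finset.single_le_sum (fun x' _ => hp x' y t) (Finset.mem_univ x)
  have hpx_le_pt : ∀ x t, (∑ y, p x y t) ≤ ∑ x', ∑ y', p x' y' t :=
    fun x t => Finset.single_le_sum (fun x' _ => hpx x' t) (Finset.mem_univ x)
  have hsum_py_eq : ∀ t, (∑ y, ∑ x, p x y t) = ∑ x, ∑ y, p x y t := fun t => Finset.sum_comm
  have ha : ∀ v : A × B × C, 0 ≤ p v.1 v.2.1 v.2.2 := fun v => hp _ _ _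
  have hb : ∀ v : A × B × C,
      0 ≤ ((∑ y', p v.1 y' v.2.2) * ∑ x', p x' v.2.1 v.2.2) / ∑ x', ∑ y', p x' y' v.2.2 :=
    fun v => div_nonneg (mul_nonneg (hpx _ _) (hpy _ _)) (hpt _)
  have hab : ∀ v : A × B × C, 0 < p v.1 v.2.1 v.2.2 →
      0 < ((∑ y', p v.1 y' v.2.2) * ∑ x', p x' v.2.1 v.2.2) / ∑ x', ∑ y', p x' y' v.2.2 := by
    intro v hav
    have h1 : 0 < ∑ y', p v.1 y' v.2.2 := lt_of_lt_of_le hav (hle_px _ _ _)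
    have h2 : 0 < ∑ x', p x' v.2.1 v.2.2 := lt_of_lt_of_le hav (hle_py _ _ _)
    have h3 : 0 < ∑ x', ∑ y', p x' y' v.2.2 := lt_of_lt_of_le h1 (hpx_le_pt _ _)
    exact div_pos (mul_pos h1 h2) h3
  have hsum : (∑ v : A × B × C,
        ((∑ y', p v.1 y' v.2.2) * ∑ x', p x' v.2.1 v.2.2) / ∑ x', ∑ y', p x' y' v.2.2)
      ≤ ∑ v : A × B × C, p v.1 v.2.1 v.2.2 := by
    rw [show (∑ v : A × B × C,
          ((∑ y', p v.1 y' v.2.2) * ∑ x', p x' v.2.1 v.2.2) / ∑ x', ∑ y', p x' y' v.2.2)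
        = ∑ x, ∑ y, ∑ t, ((∑ y', p x y' t) * (∑ x', p x' y t) / (∑ x', ∑ y', p x' y' t))
        from flat (fun x y t => (∑ y', p x y' t) * (∑ x', p x' y t) / (∑ x', ∑ y', p x' y' t)),
      flat (fun x y t => p x y t)]
    rw [commC (fun x y t => (∑ y', p x y' t) * (∑ x', p x' y t) / (∑ x', ∑ y', p x' y' t)),
      commC p]
    apply Finset.sum_le_sum
    intro t _
    have inner : (∑ x, ∑ y, ((∑ y', p x y' t) * (∑ x', p x' y t) / (∑ x', ∑ y', p x' y' t)))
        = (∑ x', ∑ y', p x' y' t) * ((∑ x', ∑ y', p x' y' t) / (∑ x', ∑ y', p x' y' t)) := by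
      rw [Finset.sum_mul]
      apply Finset.sum_congr rfl
      intro x _
      calc ∑ y, ((∑ y', p x y' t) * ∑ x', p x' y t) / ∑ x', ∑ y', p x' y' t
          = ∑ y, (∑ y', p x y' t) * ((∑ x', p x' y t) / (∑ x', ∑ y', p x' y' t)) := by
            apply Finset.sum_congr rfl; intro y _; rw [mul_div_assoc]
        _ = (∑ y', p x y' t) * ∑ y, ((∑ x', p x' y t) / (∑ x', ∑ y', p x' y' t)) := by
            rw [Finset.mul_sum]
        _ = (∑ y', p x y' t) * ((∑ y, ∑ x', p x' y t) / (∑ x', ∑ y', p x' y' t)) := by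
            rw [Finset.sum_div]
        _ = (∑ y', p x y' t) * ((∑ x', ∑ y', p x' y' t) / (∑ x', ∑ y', p x' y' t)) := by
            rw [hsum_py_eq t]
    rw [inner]
    rcases eq_or_lt_of_le (hpt t) with h | h
    · rw [← h]; simp
    · rw [div_self (ne_of_gt h), mul_one]
  have hzero : ∑ v : A × B × C,
      (p v.1 v.2.1 v.2.2 *
          Real.log (((∑ y', p v.1 y' v.2.2) * ∑ x', p x' v.2.1 v.2.2) / ∑ x', ∑ y', p x' y' v.2.2)
        - p v.1 v.2.1 v.2.2 * Real.log (p v.1 v.2.1 v.2.2)) = 0 := by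
    have step1 : ∀ v : A × B × C, p v.1 v.2.1 v.2.2 *
          Real.log (((∑ y', p v.1 y' v.2.2) * ∑ x', p x' v.2.1 v.2.2) / ∑ x', ∑ y', p x' y' v.2.2)
          - p v.1 v.2.1 v.2.2 * Real.log (p v.1 v.2.1 v.2.2)
        = p v.1 v.2.1 v.2.2 * Real.log (∑ y', p v.1 y' v.2.2)
          + p v.1 v.2.1 v.2.2 * Real.log (∑ x', p x' v.2.1 v.2.2)
          - p v.1 v.2.1 v.2.2 * Real.log (∑ x', ∑ y', p x' y' v.2.2)
          - p v.1 v.2.1 v.2.2 * Real.log (p v.1 v.2.1 v.2.2) := by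
      intro v
      rcases eq_or_lt_of_le (ha v) with h | h
      · rw [← h]; ring
      · have h1 : 0 < ∑ y', p v.1 y' v.2.2 := lt_of_lt_of_le h (hle_px _ _ _)
        have h2 : 0 < ∑ x', p x' v.2.1 v.2.2 := lt_of_lt_of_le h (hle_py _ _ _)
        have h3 : 0 < ∑ x', ∑ y', p x' y' v.2.2 := lt_of_lt_of_le h1 (hpx_le_pt _ _)
        rw [Real.log_div (ne_of_gt (mul_pos h1 h2)) (ne_of_gt h3),
          Real.log_mul (ne_of_gt h1) (ne_of_gt h2)]
        ring
    rw [Finset.sum_congr rfl (fun v _ => step1 v)]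
    rw [show ∑ v : A × B × C,
        (p v.1 v.2.1 v.2.2 * Real.log (∑ y', p v.1 y' v.2.2)
          + p v.1 v.2.1 v.2.2 * Real.log (∑ x', p x' v.2.1 v.2.2)
          - p v.1 v.2.1 v.2.2 * Real.log (∑ x', ∑ y', p x' y' v.2.2)
          - p v.1 v.2.1 v.2.2 * Real.log (p v.1 v.2.1 v.2.2))
        = (∑ v : A × B × C, p v.1 v.2.1 v.2.2 * Real.log (∑ y', p v.1 y' v.2.2))
          + (∑ v : A × B × C, p v.1 v.2.1 v.2.2 * Real.log (∑ x', p x' v.2.1 v.2.2))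
          - (∑ v : A × B × C, p v.1 v.2.1 v.2.2 * Real.log (∑ x', ∑ y', p x' y' v.2.2))
          - (∑ v : A × B × C, p v.1 v.2.1 v.2.2 * Real.log (p v.1 v.2.1 v.2.2)) by
      rw [← Finset.sum_add_distrib, ← Finset.sum_sub_distrib, ← Finset.sum_sub_distrib]]
    have E1 : (∑ v : A × B × C, p v.1 v.2.1 v.2.2 * Real.log (∑ y', p v.1 y' v.2.2))
        = - ∑ x, ∑ t, negMulLog (∑ y, p x y t) := by
      rw [flat (fun x y t => p x y t * Real.log (∑ y', p x y' t))]
      rw [commA (fun x y t => p x y t * Real.log (∑ y', p x y' t))]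
      rw [← Finset.sum_neg_distrib]
      apply Finset.sum_congr rfl; intro x _
      rw [← Finset.sum_neg_distrib]
      apply Finset.sum_congr rfl; intro t _
      rw [← Finset.sum_mul]
      simp [Real.negMulLog, neg_mul]
    have E2 : (∑ v : A × B × C, p v.1 v.2.1 v.2.2 * Real.log (∑ x', p x' v.2.1 v.2.2))
        = - ∑ y, ∑ t, negMulLog (∑ x, p x y t) := by
      rw [flat (fun x y t => p x y t * Real.log (∑ x', p x' y t))]
      rw [commB (fun x y t => p x y t * Real.log (∑ x', p x' y t))]
      rw [← Finset.sum_neg_distrib]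
      apply Finset.sum_congr rfl; intro y _
      rw [← Finset.sum_neg_distrib]
      apply Finset.sum_congr rfl; intro t _
      rw [← Finset.sum_mul]
      simp [Real.negMulLog, neg_mul]
    have E3 : (∑ v : A × B × C, p v.1 v.2.1 v.2.2 * Real.log (∑ x', ∑ y', p x' y' v.2.2))
        = - ∑ t, negMulLog (∑ x, ∑ y, p x y t) := by
      rw [flat (fun x y t => p x y t * Real.log (∑ x', ∑ y', p x' y' t))]
      rw [commC (fun x y t => p x y t * Real.log (∑ x', ∑ y', p x' y' t))]
      rw [← Finset.sum_neg_distrib]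
      apply Finset.sum_congr rfl; intro t _
      rw [show (∑ x, ∑ y, p x y t * Real.log (∑ x', ∑ y', p x' y' t))
          = (∑ x, ∑ y, p x y t) * Real.log (∑ x', ∑ y', p x' y' t) by
        rw [Finset.sum_mul]
        exact Finset.sum_congr rfl (fun x _ => by rw [Finset.sum_mul])]
      simp [Real.negMulLog, neg_mul]
    have E4 : (∑ v : A × B × C, p v.1 v.2.1 v.2.2 * Real.log (p v.1 v.2.1 v.2.2))
        = - ∑ x, ∑ y, ∑ t, negMulLog (p x y t) := by
      rw [flat (fun x y t => p x y t * Real.log (p x y t))]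
      simp [Real.negMulLog, neg_mul, Finset.sum_neg_distrib]
    rw [E1, E2, E3, E4]
    linarith
  have hmain := gibbs_eq (fun v : A × B × C => p v.1 v.2.1 v.2.2)
    (fun v : A × B × C =>
      ((∑ y', p v.1 y' v.2.2) * ∑ x', p x' v.2.1 v.2.2) / ∑ x', ∑ y', p x' y' v.2.2)
    ha hb hab hsum hzero
  intro x y t
  have heq := hmain (x, y, t)
  simp only at heq
  rcases eq_or_lt_of_le (hpt t) with h | h
  · have hx0 : (∑ y', p x y' t) = 0 :=
      le_antisymm (le_trans (hpx_le_pt x t) (le_of_eq h.symm)) (hpx x t)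
    have hp0 : p x y t = 0 := le_antisymm (le_trans (hle_px x y t) (le_of_eq hx0)) (hp x y t)
    rw [hp0, hx0]; ring
  · rw [heq, div_mul_cancel₀]
    exact ne_of_gt h

lemma core_bound {A C : Type*} [Fintype A] [DecidableEq A] [Fintype C]
    (hA : Fintype.card A = 3)
    (p : A → A → C → ℝ) (hp : ∀ x y t, 0 ≤ p x y t)
    (hfact : ∀ x y t, p x y t * (∑ x', ∑ y', p x' y' t) = (∑ y', p x y' t) * (∑ x', p x' y t))
    (hdetx : ∀ x t, p x x t = 0 ∨ p x x t = ∑ y, p x y t)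
    (hdety : ∀ y t, p y y t = 0 ∨ p y y t = ∑ x, p x y t)
    (hmarg : ∀ x y, ∑ t, p x y t = 1/9) :
    ((∑ x, ∑ t, negMulLog (∑ y, p x y t)) - ∑ t, negMulLog (∑ x, ∑ y, p x y t))
    + ((∑ y, ∑ t, negMulLog (∑ x, p x y t)) - ∑ t, negMulLog (∑ x, ∑ y, p x y t))
      ≤ 2/3 * Real.log 2 := by
  classical
  have hpx : ∀ x t, (0:ℝ) ≤ ∑ y, p x y t := fun x t => Finset.sum_nonneg (fun y _ => hp x y t)
  have hpy : ∀ y t, (0:ℝ) ≤ ∑ x, p x y t := fun y t => Finset.sum_nonneg (fun x _ => hp x y t)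
  have hpt : ∀ t, (0:ℝ) ≤ ∑ x, ∑ y, p x y t := fun t => Finset.sum_nonneg (fun x _ => hpx x t)
  have hle_px : ∀ x y t, p x y t ≤ ∑ y', p x y' t :=
    fun x y t => Finset.single_le_sum (fun y' _ => hp x y' t) (Finset.mem_univ y)
  have hpx_le_pt : ∀ x t, (∑ y, p x y t) ≤ ∑ x', ∑ y', p x' y' t :=
    fun x t => Finset.single_le_sum (fun x' _ => hpx x' t) (Finset.mem_univ x)
  have hsum_py_eq : ∀ t, (∑ y, ∑ x, p x y t) = ∑ x, ∑ y, p x y t := fun t => Finset.sum_comm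
  -- per-t bound
  have pert : ∀ t, ((∑ x, negMulLog (∑ y, p x y t)) - negMulLog (∑ x, ∑ y, p x y t))
      + ((∑ y, negMulLog (∑ x, p x y t)) - negMulLog (∑ x, ∑ y, p x y t))
      ≤ Real.log 2 * (∑ x, ∑ y, (if x = y then 0 else p x y t)) := by
    intro t
    rcases eq_or_lt_of_le (hpt t) with h | h
    · -- everything vanishes
      have hx0 : ∀ x, (∑ y, p x y t) = 0 := fun x =>
        le_antisymm (le_trans (hpx_le_pt x t) (le_of_eq h.symm)) (hpx x t)
      have hall : ∀ x y, p x y t = 0 := fun x y =>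
        le_antisymm (le_trans (hle_px x y t) (le_of_eq (hx0 x))) (hp x y t)
      have hy0 : ∀ y, (∑ x, p x y t) = 0 := fun y => Finset.sum_eq_zero (fun x _ => hall x y)
      simp [hx0, hy0, ← h, hall, Real.negMulLog_zero]
    · set P := ∑ x, ∑ y, p x y t with hP
      have hPne : P ≠ 0 := ne_of_gt h
      set r : A → ℝ := fun x => (∑ y, p x y t) / P with hr_def
      set s : A → ℝ := fun y => (∑ x, p x y t) / P with hs_def
      have hr : ∀ a, 0 ≤ r a := fun a => div_nonneg (hpx a t) h.le
      have hs : ∀ a, 0 ≤ s a := fun a => div_nonneg (hpy a t) h.le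
      have hr1 : ∑ a, r a = 1 := by
        simp only [hr_def]
        rw [← Finset.sum_div, ← hP, div_self hPne]
      have hs1 : ∑ a, s a = 1 := by
        simp only [hs_def]
        rw [← Finset.sum_div, hsum_py_eq t, ← hP, div_self hPne]
      have hprs : ∀ x y, p x y t = P * (r x * s y) := by
        intro x y
        have := hfact x y t
        rw [← hP] at this
        simp only [hr_def, hs_def]
        field_simp
        linear_combination this
      have hdet1 : ∀ a, r a * s a = 0 ∨ ∀ b, b ≠ a → r a * s b = 0 := by
        intro a
        rcases hdetx a t with h1 | h1
        · left
          have := hprs a a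
          rw [h1] at this
          rcases mul_eq_zero.mp this.symm with h' | h'
          · exact absurd h' hPne
          · exact h'
        · right
          intro b hb
          have hz : ∀ b', b' ≠ a → p a b' t = 0 := by
            have hsplit : ∑ y, p a y t = p a a t + ∑ y ∈ Finset.univ.erase a, p a y t := by
              rw [← Finset.add_sum_erase _ _ (Finset.mem_univ a)]
            have h2 : ∑ y ∈ Finset.univ.erase a, p a y t = 0 := by linarith [h1, hsplit]
            intro b' hb'
            have := (Finset.sum_eq_zero_iff_of_nonneg (fun y _ => hp a y t)).mp h2 b'
              (Finset.mem_erase.mpr ⟨hb', Finset.mem_univ b'⟩)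
            exact this
          have := hprs a b
          rw [hz b hb] at this
          rcases mul_eq_zero.mp this.symm with h' | h'
          · exact absurd h' hPne
          · exact h'
      have hdet2 : ∀ a, r a * s a = 0 ∨ ∀ b, b ≠ a → r b * s a = 0 := by
        intro a
        rcases hdety a t with h1 | h1
        · left
          have := hprs a a
          rw [h1] at this
          rcases mul_eq_zero.mp this.symm with h' | h'
          · exact absurd h' hPne
          · exact h'
        · right
          intro b hb
          have hz : ∀ b', b' ≠ a → p b' a t = 0 := by
            have hsplit : ∑ x, p x a t = p a a t + ∑ x ∈ Finset.univ.erase a, p x a t := by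
              rw [← Finset.add_sum_erase _ _ (Finset.mem_univ a)]
            have h2 : ∑ x ∈ Finset.univ.erase a, p x a t = 0 := by linarith [h1, hsplit]
            intro b' hb'
            exact (Finset.sum_eq_zero_iff_of_nonneg (fun x _ => hp x a t)).mp h2 b'
              (Finset.mem_erase.mpr ⟨hb', Finset.mem_univ b'⟩)
          have := hprs b a
          rw [hz b hb] at this
          rcases mul_eq_zero.mp this.symm with h' | h'
          · exact absurd h' hPne
          · exact h'
      have hkey := key_lemma hA r s hr hs hr1 hs1 hdet1 hdet2
      -- transform LHS
      have hLx : (∑ x, negMulLog (∑ y, p x y t)) - negMulLog P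
          = P * ∑ x, negMulLog (r x) := by
        have : ∀ x, (∑ y, p x y t) = P * r x := by
          intro x
          simp only [hr_def]
          rw [mul_div_cancel₀ _ hPne]
        rw [Finset.sum_congr rfl (fun x _ => by rw [this x, Real.negMulLog_mul])]
        rw [Finset.sum_add_distrib, ← Finset.sum_mul, hr1, ← Finset.mul_sum]
        ring
      have hLy : (∑ y, negMulLog (∑ x, p x y t)) - negMulLog P
          = P * ∑ y, negMulLog (s y) := by
        have : ∀ y, (∑ x, p x y t) = P * s y := by
          intro y
          simp only [hs_def]
          rw [mul_div_cancel₀ _ hPne]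
        rw [Finset.sum_congr rfl (fun y _ => by rw [this y, Real.negMulLog_mul])]
        rw [Finset.sum_add_distrib, ← Finset.sum_mul, hs1, ← Finset.mul_sum]
        ring
      -- transform RHS
      have hR : (∑ x, ∑ y, (if x = y then 0 else p x y t)) = P * (1 - ∑ a, r a * s a) := by
        have hsplit : ∀ x, (∑ y, (if x = y then 0 else p x y t)) = (∑ y, p x y t) - p x x t := by
          intro x
          have : ∀ y, (if x = y then 0 else p x y t) = p x y t - (if x = y then p x y t else 0) := by
            intro y; split <;> ring
          rw [Finset.sum_congr rfl (fun y _ => this y), Finset.sum_sub_distrib,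
            Finset.sum_ite_eq]
          simp
        rw [Finset.sum_congr rfl (fun x _ => hsplit x), Finset.sum_sub_distrib, ← hP]
        have : ∑ x, p x x t = P * ∑ a, r a * s a := by
          rw [Finset.mul_sum]
          exact Finset.sum_congr rfl (fun a _ => hprs a a)
        rw [this]
        ring
      rw [hLx, hLy, hR]
      have h2 := mul_le_mul_of_nonneg_left hkey h.le
      calc P * ∑ x, negMulLog (r x) + P * ∑ y, negMulLog (s y)
          = P * (∑ a, negMulLog (r a) + ∑ a, negMulLog (s a)) := by ring
        _ ≤ P * (Real.log 2 * (1 - ∑ a, r a * s a)) := h2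
        _ = Real.log 2 * (P * (1 - ∑ a, r a * s a)) := by ring
  -- sum over t
  have reorder : ∀ (f : A → C → ℝ), ∑ x, ∑ t, f x t = ∑ t, ∑ x, f x t := fun f => Finset.sum_comm
  rw [reorder (fun x t => negMulLog (∑ y, p x y t)), reorder (fun y t => negMulLog (∑ x, p x y t))]
  have step : ((∑ t, ∑ x, negMulLog (∑ y, p x y t)) - ∑ t, negMulLog (∑ x, ∑ y, p x y t))
      + ((∑ t, ∑ y, negMulLog (∑ x, p x y t)) - ∑ t, negMulLog (∑ x, ∑ y, p x y t))
      = ∑ t, (((∑ x, negMulLog (∑ y, p x y t)) - negMulLog (∑ x, ∑ y, p x y t))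
        + ((∑ y, negMulLog (∑ x, p x y t)) - negMulLog (∑ x, ∑ y, p x y t))) := by
    rw [Finset.sum_add_distrib, Finset.sum_sub_distrib, Finset.sum_sub_distrib]
  rw [step]
  calc ∑ t, (((∑ x, negMulLog (∑ y, p x y t)) - negMulLog (∑ x, ∑ y, p x y t))
        + ((∑ y, negMulLog (∑ x, p x y t)) - negMulLog (∑ x, ∑ y, p x y t)))
      ≤ ∑ t, Real.log 2 * (∑ x, ∑ y, (if x = y then 0 else p x y t)) :=
        Finset.sum_le_sum (fun t _ => pert t)
    _ = Real.log 2 * ∑ t, ∑ x, ∑ y, (if x = y then 0 else p x y t) := by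
        rw [Finset.mul_sum]
    _ = 2/3 * Real.log 2 := by
        have swap : ∑ t, ∑ x, ∑ y, (if x = y then 0 else p x y t)
            = ∑ x, ∑ y, ∑ t, (if x = y then 0 else p x y t) := by
          rw [Finset.sum_comm]
          exact Finset.sum_congr rfl (fun x _ => Finset.sum_comm)
        have inner : ∀ x y, (∑ t, (if x = y then 0 else p x y t))
            = (if x = y then (0:ℝ) else 1/9) := by
          intro x y
          split
          · simp
          · rw [← hmarg x y]
        have : ∑ x : A, ∑ y : A, (if x = y then (0:ℝ) else 1/9) = 2/3 := by
          have hy : ∀ x : A, ∑ y : A, (if x = y then (0:ℝ) else 1/9) = 2/9 := by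
            intro x
            have h1 : ∀ y, (if x = y then (0:ℝ) else 1/9)
                = 1/9 - (if x = y then (1:ℝ)/9 else 0) := by intro y; split <;> ring
            rw [Finset.sum_congr rfl (fun y _ => h1 y), Finset.sum_sub_distrib,
              Finset.sum_const, Finset.card_univ, hA, Finset.sum_ite_eq]
            simp only [Finset.mem_univ, if_true, nsmul_eq_mul]
            norm_num
          rw [Finset.sum_congr rfl (fun x _ => hy x), Finset.sum_const, Finset.card_univ, hA]
          simp only [nsmul_eq_mul]
          norm_num
        rw [swap, Finset.sum_congr rfl (fun x _ => Finset.sum_congr rfl (fun y _ => inner x y)),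
          this]
        ring

/-! ### Bridge lemmas -/

lemma pm_comp {Ω V S : Type*} [MeasurableSpace Ω] (μ : Measure Ω) [IsProbabilityMeasure μ]
    [Fintype V] [MeasurableSpace V] [MeasurableSingletonClass V] [DecidableEq S]
    (W : Ω → V) (hW : Measurable W) (f : V → S) (s : S) :
    pm μ (f ∘ W) s = ∑ v ∈ Finset.univ.filter (fun v => f v = s), pm μ W v := by
  unfold pm
  have h1 : (f ∘ W) ⁻¹' {s} = ⋃ v ∈ Finset.univ.filter (fun v => f v = s), W ⁻¹' {v} := by
    ext ω
    simp only [Set.mem_preimage, Function.comp_apply, Set.mem_singleton_iff, Set.mem_iUnion,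
      Finset.mem_filter, Finset.mem_univ, true_and]
    constructor
    · intro h; exact ⟨W ω, h, rfl⟩
    · rintro ⟨v, hv, h⟩; rw [h]; exact hv
  rw [h1, measure_biUnion_finset ?hd ?hm, ENNReal.toReal_sum (fun v _ => measure_ne_top μ _)]
  case hd =>
    intro v _ w _ hvw
    simp only [Function.onFun]
    apply Set.disjoint_left.mpr
    intro ω h1 h2
    simp only [Set.mem_preimage, Set.mem_singleton_iff] at h1 h2
    exact hvw (h1 ▸ h2 ▸ rfl)
  case hm => intro v _; exact hW (measurableSet_singleton v)

lemma entH_comp {Ω V S : Type*} [MeasurableSpace Ω] (μ : Measure Ω) [IsProbabilityMeasure μ]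
    [Fintype V] [MeasurableSpace V] [MeasurableSingletonClass V] [Fintype S] [DecidableEq S]
    (W : Ω → V) (hW : Measurable W) (f : V → S) :
    entH μ (f ∘ W) = ∑ s : S,
      Real.negMulLog (∑ v ∈ Finset.univ.filter (fun v => f v = s), pm μ W v) :=
  Finset.sum_congr rfl (fun s _ => by rw [pm_comp μ W hW f s])

lemma sum_flat {A B C : Type*} [Fintype A] [Fintype B] [Fintype C] (f : A → B → C → ℝ) :
    ∑ v : A × B × C, f v.1 v.2.1 v.2.2 = ∑ x, ∑ y, ∑ t, f x y t := by
  rw [Fintype.sum_prod_type]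
  exact Finset.sum_congr rfl fun x _ => Fintype.sum_prod_type _

lemma sum3_xty {A B C : Type*} [Fintype A] [Fintype B] [Fintype C] (f : A → B → C → ℝ) :
    ∑ x, ∑ y, ∑ t, f x y t = ∑ x, ∑ t, ∑ y, f x y t :=
  Finset.sum_congr rfl (fun x _ => Finset.sum_comm)

lemma sum3_ytx {A B C : Type*} [Fintype A] [Fintype B] [Fintype C] (f : A → B → C → ℝ) :
    ∑ x, ∑ y, ∑ t, f x y t = ∑ y, ∑ t, ∑ x, f x y t :=
  Finset.sum_comm.trans (Finset.sum_congr rfl (fun y _ => Finset.sum_comm))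

section margs
variable {A B C : Type*} [Fintype A] [Fintype B] [Fintype C]
  [DecidableEq A] [DecidableEq B] [DecidableEq C] (q : A × B × C → ℝ)

set_option linter.unusedSectionVars false

lemma marg_XM (x : A) (t : C) :
    ∑ v ∈ Finset.univ.filter (fun v : A × B × C => (v.1, v.2.2) = (x, t)), q v
      = ∑ y, q (x, y, t) := by
  rw [Finset.sum_filter,
    show (∑ v : A × B × C, if (v.1, v.2.2) = (x, t) then q v else 0)
      = ∑ a, ∑ b, ∑ c, if (a, c) = (x, t) then q (a, b, c) else 0 from
      sum_flat (fun a b c => if (a, c) = (x, t) then q (a, b, c) else 0)]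
  simp [Prod.ext_iff, ite_and, Finset.sum_ite_eq, Finset.sum_ite_eq']

lemma marg_MX (t : C) (x : A) :
    ∑ v ∈ Finset.univ.filter (fun v : A × B × C => (v.2.2, v.1) = (t, x)), q v
      = ∑ y, q (x, y, t) := by
  rw [Finset.sum_filter,
    show (∑ v : A × B × C, if (v.2.2, v.1) = (t, x) then q v else 0)
      = ∑ a, ∑ b, ∑ c, if (c, a) = (t, x) then q (a, b, c) else 0 from
      sum_flat (fun a b c => if (c, a) = (t, x) then q (a, b, c) else 0)]
  simp [Prod.ext_iff, ite_and, Finset.sum_ite_eq, Finset.sum_ite_eq']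

lemma marg_YM (y : B) (t : C) :
    ∑ v ∈ Finset.univ.filter (fun v : A × B × C => (v.2.1, v.2.2) = (y, t)), q v
      = ∑ x, q (x, y, t) := by
  rw [Finset.sum_filter,
    show (∑ v : A × B × C, if (v.2.1, v.2.2) = (y, t) then q v else 0)
      = ∑ a, ∑ b, ∑ c, if (b, c) = (y, t) then q (a, b, c) else 0 from
      sum_flat (fun a b c => if (b, c) = (y, t) then q (a, b, c) else 0)]
  simp [Prod.ext_iff, ite_and, Finset.sum_ite_eq, Finset.sum_ite_eq']

lemma marg_MY (t : C) (y : B) :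
    ∑ v ∈ Finset.univ.filter (fun v : A × B × C => (v.2.2, v.2.1) = (t, y)), q v
      = ∑ x, q (x, y, t) := by
  rw [Finset.sum_filter,
    show (∑ v : A × B × C, if (v.2.2, v.2.1) = (t, y) then q v else 0)
      = ∑ a, ∑ b, ∑ c, if (c, b) = (t, y) then q (a, b, c) else 0 from
      sum_flat (fun a b c => if (c, b) = (t, y) then q (a, b, c) else 0)]
  simp [Prod.ext_iff, ite_and, Finset.sum_ite_eq, Finset.sum_ite_eq']

lemma marg_M (t : C) :
    ∑ v ∈ Finset.univ.filter (fun v : A × B × C => v.2.2 = t), q v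
      = ∑ x, ∑ y, q (x, y, t) := by
  rw [Finset.sum_filter,
    show (∑ v : A × B × C, if v.2.2 = t then q v else 0)
      = ∑ a, ∑ b, ∑ c, if c = t then q (a, b, c) else 0 from
      sum_flat (fun a b c => if c = t then q (a, b, c) else 0)]
  simp [Finset.sum_ite_eq, Finset.sum_ite_eq']

lemma marg_X (x : A) :
    ∑ v ∈ Finset.univ.filter (fun v : A × B × C => v.1 = x), q v
      = ∑ y, ∑ t, q (x, y, t) := by
  rw [Finset.sum_filter,
    show (∑ v : A × B × C, if v.1 = x then q v else 0)
      = ∑ a, ∑ b, ∑ c, if a = x then q (a, b, c) else 0 from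
      sum_flat (fun a b c => if a = x then q (a, b, c) else 0)]
  simp [Finset.sum_ite_eq, Finset.sum_ite_eq']

lemma marg_Y (y : B) :
    ∑ v ∈ Finset.univ.filter (fun v : A × B × C => v.2.1 = y), q v
      = ∑ x, ∑ t, q (x, y, t) := by
  rw [Finset.sum_filter,
    show (∑ v : A × B × C, if v.2.1 = y then q v else 0)
      = ∑ a, ∑ b, ∑ c, if b = y then q (a, b, c) else 0 from
      sum_flat (fun a b c => if b = y then q (a, b, c) else 0)]
  simp [Finset.sum_ite_eq, Finset.sum_ite_eq']

lemma marg_XY (x : A) (y : B) :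
    ∑ v ∈ Finset.univ.filter (fun v : A × B × C => (v.1, v.2.1) = (x, y)), q v
      = ∑ t, q (x, y, t) := by
  rw [Finset.sum_filter,
    show (∑ v : A × B × C, if (v.1, v.2.1) = (x, y) then q v else 0)
      = ∑ a, ∑ b, ∑ c, if (a, b) = (x, y) then q (a, b, c) else 0 from
      sum_flat (fun a b c => if (a, b) = (x, y) then q (a, b, c) else 0)]
  simp [Prod.ext_iff, ite_and, Finset.sum_ite_eq, Finset.sum_ite_eq']

lemma marg_YX (y : B) (x : A) :
    ∑ v ∈ Finset.univ.filter (fun v : A × B × C => (v.2.1, v.1) = (y, x)), q v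
      = ∑ t, q (x, y, t) := by
  rw [Finset.sum_filter,
    show (∑ v : A × B × C, if (v.2.1, v.1) = (y, x) then q v else 0)
      = ∑ a, ∑ b, ∑ c, if (b, a) = (y, x) then q (a, b, c) else 0 from
      sum_flat (fun a b c => if (b, a) = (y, x) then q (a, b, c) else 0)]
  simp [Prod.ext_iff, ite_and, Finset.sum_ite_eq, Finset.sum_ite_eq']

lemma marg_XYM (x : A) (y : B) (t : C) :
    ∑ v ∈ Finset.univ.filter (fun v : A × B × C => ((v.1, v.2.1), v.2.2) = ((x, y), t)), q v
      = q (x, y, t) := by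
  rw [Finset.sum_filter,
    show (∑ v : A × B × C, if ((v.1, v.2.1), v.2.2) = ((x, y), t) then q v else 0)
      = ∑ a, ∑ b, ∑ c, if ((a, b), c) = ((x, y), t) then q (a, b, c) else 0 from
      sum_flat (fun a b c => if ((a, b), c) = ((x, y), t) then q (a, b, c) else 0)]
  simp [Prod.ext_iff, ite_and, Finset.sum_ite_eq, Finset.sum_ite_eq']

lemma marg_XMY (x : A) (t : C) (y : B) :
    ∑ v ∈ Finset.univ.filter (fun v : A × B × C => ((v.1, v.2.2), v.2.1) = ((x, t), y)), q v
      = q (x, y, t) := by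
  rw [Finset.sum_filter,
    show (∑ v : A × B × C, if ((v.1, v.2.2), v.2.1) = ((x, t), y) then q v else 0)
      = ∑ a, ∑ b, ∑ c, if ((a, c), b) = ((x, t), y) then q (a, b, c) else 0 from
      sum_flat (fun a b c => if ((a, c), b) = ((x, t), y) then q (a, b, c) else 0)]
  simp [Prod.ext_iff, ite_and, Finset.sum_ite_eq, Finset.sum_ite_eq']

lemma marg_YMX (y : B) (t : C) (x : A) :
    ∑ v ∈ Finset.univ.filter (fun v : A × B × C => ((v.2.1, v.2.2), v.1) = ((y, t), x)), q v
      = q (x, y, t) := by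
  rw [Finset.sum_filter,
    show (∑ v : A × B × C, if ((v.2.1, v.2.2), v.1) = ((y, t), x) then q v else 0)
      = ∑ a, ∑ b, ∑ c, if ((b, c), a) = ((y, t), x) then q (a, b, c) else 0 from
      sum_flat (fun a b c => if ((b, c), a) = ((y, t), x) then q (a, b, c) else 0)]
  simp [Prod.ext_iff, ite_and, Finset.sum_ite_eq, Finset.sum_ite_eq']

lemma marg_MXw (w : C × A) :
    ∑ v ∈ Finset.univ.filter (fun v : A × B × C => (v.2.2, v.1) = w), q v
      = ∑ y, q (w.2, y, w.1) := by
  obtain ⟨t, x⟩ := w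
  exact marg_MX q t x

lemma marg_MYw (w : C × B) :
    ∑ v ∈ Finset.univ.filter (fun v : A × B × C => (v.2.2, v.2.1) = w), q v
      = ∑ x, q (x, w.2, w.1) := by
  obtain ⟨t, y⟩ := w
  exact marg_MY q t y

end margs

lemma marg_ZMX {A C : Type*} [Fintype A] [Fintype C] [DecidableEq A] [DecidableEq C]
    (q : A × A × C → ℝ) (z : Fin 2) (w : C × A) :
    ∑ v ∈ Finset.univ.filter (fun v : A × A × C =>
        ((if v.1 = v.2.1 then (1 : Fin 2) else 0), (v.2.2, v.1)) = (z, w)), q v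
      = ∑ y, if (if w.2 = y then (1 : Fin 2) else 0) = z then q (w.2, y, w.1) else 0 := by
  obtain ⟨t, x⟩ := w
  rw [Finset.sum_filter,
    show (∑ v : A × A × C, if ((if v.1 = v.2.1 then (1 : Fin 2) else 0), (v.2.2, v.1)) = (z, (t, x))
          then q v else 0)
      = ∑ a, ∑ b, ∑ c, if ((if a = b then (1 : Fin 2) else 0), (c, a)) = (z, (t, x))
          then q (a, b, c) else 0 from
      sum_flat (fun a b c => if ((if a = b then (1 : Fin 2) else 0), (c, a)) = (z, (t, x))
          then q (a, b, c) else 0)]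
  simp only [Prod.mk.injEq]
  rw [Finset.sum_comm]
  simp [ite_and, Finset.sum_ite_eq, Finset.sum_ite_eq']
  apply Finset.sum_congr rfl
  intro b _
  have hsw : ∀ a, (if (if a = b then (1:Fin 2) else 0) = z then if a = x then q (a, b, t) else 0 else 0)
      = if a = x then (if (if a = b then (1:Fin 2) else 0) = z then q (a, b, t) else 0) else 0 := by
    intro a
    by_cases h : a = x <;> by_cases h2 : (if a = b then (1:Fin 2) else 0) = z <;> simp [h, h2]
  rw [Finset.sum_congr rfl (fun a _ => hsw a), Finset.sum_ite_eq']
  simp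

lemma marg_ZMY {A C : Type*} [Fintype A] [Fintype C] [DecidableEq A] [DecidableEq C]
    (q : A × A × C → ℝ) (z : Fin 2) (w : C × A) :
    ∑ v ∈ Finset.univ.filter (fun v : A × A × C =>
        ((if v.1 = v.2.1 then (1 : Fin 2) else 0), (v.2.2, v.2.1)) = (z, w)), q v
      = ∑ x, if (if x = w.2 then (1 : Fin 2) else 0) = z then q (x, w.2, w.1) else 0 := by
  obtain ⟨t, y⟩ := w
  rw [Finset.sum_filter,
    show (∑ v : A × A × C, if ((if v.1 = v.2.1 then (1 : Fin 2) else 0), (v.2.2, v.2.1)) = (z, (t, y))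
          then q v else 0)
      = ∑ a, ∑ b, ∑ c, if ((if a = b then (1 : Fin 2) else 0), (c, b)) = (z, (t, y))
          then q (a, b, c) else 0 from
      sum_flat (fun a b c => if ((if a = b then (1 : Fin 2) else 0), (c, b)) = (z, (t, y))
          then q (a, b, c) else 0)]
  simp only [Prod.mk.injEq]
  simp [ite_and, Finset.sum_ite_eq, Finset.sum_ite_eq']
  apply Finset.sum_congr rfl
  intro a _
  have hsw : ∀ b, (if (if a = b then (1:Fin 2) else 0) = z then if b = y then q (a, b, t) else 0 else 0)
      = if b = y then (if (if a = b then (1:Fin 2) else 0) = z then q (a, b, t) else 0) else 0 := by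
    intro b
    by_cases h : b = y <;> by_cases h2 : (if a = b then (1:Fin 2) else 0) = z <;> simp [h, h2]
  rw [Finset.sum_congr rfl (fun b _ => hsw b), Finset.sum_ite_eq']
  simp

/-- Ternary EQ lower bound: for any finite-valued `M` with `I(X ; Y | M) = 0`,
`H(Z | (M,X)) = 0` and `H(Z | (M,Y)) = 0`, we have
`I(X ; M | Y) + I(Y ; M | X) ≥ 2 log 3 − (2/3) log 2`. -/
theorem ternary_EQ_information_cost_lower_bound
    {Ω : Type*} [MeasurableSpace Ω] (μ : Measure Ω) [IsProbabilityMeasure μ]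
    {A : Type*} [Fintype A] [DecidableEq A]
    [MeasurableSpace A] [MeasurableSingletonClass A] (hA : Fintype.card A = 3)
    (X Y : Ω → A) (hX : Measurable X) (hY : Measurable Y)
    (hindep : IndepFun X Y μ)
    (hXunif : ∀ a : A, μ (X ⁻¹' {a}) = (3 : ℝ≥0∞)⁻¹)
    (hYunif : ∀ a : A, μ (Y ⁻¹' {a}) = (3 : ℝ≥0∞)⁻¹)
    (Z : Ω → Fin 2) (hZ : Z = fun ω => if X ω = Y ω then 1 else 0)
    {T : Type*} [Fintype T] [MeasurableSpace T] [MeasurableSingletonClass T]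
    (M : Ω → T) (hM : Measurable M)
    (hXY : condMutInf μ X Y M = 0)
    (hZX : condEnt μ Z (fun ω => (M ω, X ω)) = 0)
    (hZY : condEnt μ Z (fun ω => (M ω, Y ω)) = 0) :
    condMutInf μ X M Y + condMutInf μ Y M X
      ≥ 2 * Real.log 3 - (2 / 3) * Real.log 2 := by
  classical
  subst hZ
  set W : Ω → A × A × T := fun ω => (X ω, Y ω, M ω) with hW_def
  have hW : Measurable W := hX.prodMk (hY.prodMk hM)
  have hqnn : ∀ v : A × A × T, 0 ≤ pm μ W v := fun v => ENNReal.toReal_nonneg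
  -- marginal over t is 1/9
  have hmarg : ∀ x y : A, ∑ t, pm μ W (x, y, t) = 1/9 := by
    intro x y
    have h1 := pm_comp μ W hW (fun v : A × A × T => (v.1, v.2.1)) (x, y)
    rw [marg_XY (pm μ W) x y] at h1
    rw [← h1]
    have h2 : pm μ ((fun v : A × A × T => (v.1, v.2.1)) ∘ W) (x, y)
        = pm μ (fun ω => (X ω, Y ω)) (x, y) := rfl
    rw [h2]
    unfold pm
    have hpre : (fun ω => (X ω, Y ω)) ⁻¹' {(x, y)} = X ⁻¹' {x} ∩ Y ⁻¹' {y} := by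
      ext ω; simp [Prod.ext_iff]
    rw [hpre, hindep.measure_inter_preimage_eq_mul {x} {y} (measurableSet_singleton x)
      (measurableSet_singleton y), hXunif x, hYunif y]
    rw [ENNReal.toReal_mul]
    norm_num
  -- entropy bridges
  have eXM : entH μ (fun ω => (X ω, M ω)) = ∑ x : A, ∑ t : T, negMulLog (∑ y, pm μ W (x, y, t)) := by
    calc entH μ (fun ω => (X ω, M ω))
        = entH μ ((fun v : A × A × T => (v.1, v.2.2)) ∘ W) := rfl
      _ = _ := by
        rw [entH_comp μ W hW, Fintype.sum_prod_type]
        exact Finset.sum_congr rfl fun x _ => Finset.sum_congr rfl fun t _ => by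
          rw [marg_XM (pm μ W) x t]
  have eYM : entH μ (fun ω => (Y ω, M ω)) = ∑ y : A, ∑ t : T, negMulLog (∑ x, pm μ W (x, y, t)) := by
    calc entH μ (fun ω => (Y ω, M ω))
        = entH μ ((fun v : A × A × T => (v.2.1, v.2.2)) ∘ W) := rfl
      _ = _ := by
        rw [entH_comp μ W hW, Fintype.sum_prod_type]
        exact Finset.sum_congr rfl fun y _ => Finset.sum_congr rfl fun t _ => by
          rw [marg_YM (pm μ W) y t]
  have eMX : entH μ (fun ω => (M ω, X ω)) = ∑ x : A, ∑ t : T, negMulLog (∑ y, pm μ W (x, y, t)) := by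
    calc entH μ (fun ω => (M ω, X ω))
        = entH μ ((fun v : A × A × T => (v.2.2, v.1)) ∘ W) := rfl
      _ = ∑ t : T, ∑ x : A, negMulLog (∑ y, pm μ W (x, y, t)) := by
        rw [entH_comp μ W hW, Fintype.sum_prod_type]
        exact Finset.sum_congr rfl fun t _ => Finset.sum_congr rfl fun x _ => by
          rw [marg_MX (pm μ W) t x]
      _ = _ := Finset.sum_comm
  have eMY : entH μ (fun ω => (M ω, Y ω)) = ∑ y : A, ∑ t : T, negMulLog (∑ x, pm μ W (x, y, t)) := by
    calc entH μ (fun ω => (M ω, Y ω))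
        = entH μ ((fun v : A × A × T => (v.2.2, v.2.1)) ∘ W) := rfl
      _ = ∑ t : T, ∑ y : A, negMulLog (∑ x, pm μ W (x, y, t)) := by
        rw [entH_comp μ W hW, Fintype.sum_prod_type]
        exact Finset.sum_congr rfl fun t _ => Finset.sum_congr rfl fun y _ => by
          rw [marg_MY (pm μ W) t y]
      _ = _ := Finset.sum_comm
  have eM : entH μ M = ∑ t : T, negMulLog (∑ x, ∑ y, pm μ W (x, y, t)) := by
    calc entH μ M = entH μ ((fun v : A × A × T => v.2.2) ∘ W) := rfl
      _ = _ := by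
        rw [entH_comp μ W hW]
        exact Finset.sum_congr rfl fun t _ => by rw [marg_M (pm μ W) t]
  have eXYM : entH μ (fun ω => ((X ω, Y ω), M ω))
      = ∑ x : A, ∑ y : A, ∑ t : T, negMulLog (pm μ W (x, y, t)) := by
    calc entH μ (fun ω => ((X ω, Y ω), M ω))
        = entH μ ((fun v : A × A × T => ((v.1, v.2.1), v.2.2)) ∘ W) := rfl
      _ = _ := by
        rw [entH_comp μ W hW, Fintype.sum_prod_type, Fintype.sum_prod_type]
        exact Finset.sum_congr rfl fun x _ => Finset.sum_congr rfl fun y _ =>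
          Finset.sum_congr rfl fun t _ => by rw [marg_XYM (pm μ W) x y t]
  have eXMY : entH μ (fun ω => ((X ω, M ω), Y ω))
      = ∑ x : A, ∑ y : A, ∑ t : T, negMulLog (pm μ W (x, y, t)) := by
    calc entH μ (fun ω => ((X ω, M ω), Y ω))
        = entH μ ((fun v : A × A × T => ((v.1, v.2.2), v.2.1)) ∘ W) := rfl
      _ = ∑ x : A, ∑ t : T, ∑ y : A, negMulLog (pm μ W (x, y, t)) := by
        rw [entH_comp μ W hW, Fintype.sum_prod_type, Fintype.sum_prod_type]
        exact Finset.sum_congr rfl fun x _ => Finset.sum_congr rfl fun t _ =>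
          Finset.sum_congr rfl fun y _ => by rw [marg_XMY (pm μ W) x t y]
      _ = _ := (sum3_xty (fun x y t => negMulLog (pm μ W (x, y, t)))).symm
  have eYMX : entH μ (fun ω => ((Y ω, M ω), X ω))
      = ∑ x : A, ∑ y : A, ∑ t : T, negMulLog (pm μ W (x, y, t)) := by
    calc entH μ (fun ω => ((Y ω, M ω), X ω))
        = entH μ ((fun v : A × A × T => ((v.2.1, v.2.2), v.1)) ∘ W) := rfl
      _ = ∑ y : A, ∑ t : T, ∑ x : A, negMulLog (pm μ W (x, y, t)) := by
        rw [entH_comp μ W hW, Fintype.sum_prod_type, Fintype.sum_prod_type]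
        exact Finset.sum_congr rfl fun y _ => Finset.sum_congr rfl fun t _ =>
          Finset.sum_congr rfl fun x _ => by rw [marg_YMX (pm μ W) y t x]
      _ = _ := (sum3_ytx (fun x y t => negMulLog (pm μ W (x, y, t)))).symm
  -- numeric values
  have hlog9 : Real.log 9 = 2 * Real.log 3 := by
    rw [show (9:ℝ) = 3^2 by norm_num, Real.log_pow]
    push_cast; ring
  have hn19 : negMulLog ((1:ℝ)/9) = (1/9) * Real.log 9 := by
    rw [Real.negMulLog, one_div, Real.log_inv]; ring
  have hn13 : negMulLog ((1:ℝ)/3) = (1/3) * Real.log 3 := by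
    rw [Real.negMulLog, one_div, Real.log_inv]; ring
  have eXY : entH μ (fun ω => (X ω, Y ω)) = 2 * Real.log 3 := by
    calc entH μ (fun ω => (X ω, Y ω))
        = entH μ ((fun v : A × A × T => (v.1, v.2.1)) ∘ W) := rfl
      _ = ∑ x : A, ∑ y : A, negMulLog (∑ t, pm μ W (x, y, t)) := by
        rw [entH_comp μ W hW, Fintype.sum_prod_type]
        exact Finset.sum_congr rfl fun x _ => Finset.sum_congr rfl fun y _ => by
          rw [marg_XY (pm μ W) x y]
      _ = ∑ x : A, ∑ y : A, negMulLog ((1:ℝ)/9) := by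
        exact Finset.sum_congr rfl fun x _ => Finset.sum_congr rfl fun y _ => by
          rw [hmarg x y]
      _ = 2 * Real.log 3 := by
        rw [Finset.sum_congr rfl fun x (_ : x ∈ Finset.univ) =>
          (Finset.sum_const (negMulLog ((1:ℝ)/9))), Finset.sum_const, Finset.card_univ, hA,
          hn19, hlog9]
        simp only [nsmul_eq_mul]
        push_cast; ring
  have eYX : entH μ (fun ω => (Y ω, X ω)) = 2 * Real.log 3 := by
    calc entH μ (fun ω => (Y ω, X ω))
        = entH μ ((fun v : A × A × T => (v.2.1, v.1)) ∘ W) := rfl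
      _ = ∑ y : A, ∑ x : A, negMulLog (∑ t, pm μ W (x, y, t)) := by
        rw [entH_comp μ W hW, Fintype.sum_prod_type]
        exact Finset.sum_congr rfl fun y _ => Finset.sum_congr rfl fun x _ => by
          rw [marg_YX (pm μ W) y x]
      _ = ∑ y : A, ∑ x : A, negMulLog ((1:ℝ)/9) := by
        exact Finset.sum_congr rfl fun y _ => Finset.sum_congr rfl fun x _ => by
          rw [hmarg x y]
      _ = 2 * Real.log 3 := by
        rw [Finset.sum_congr rfl fun y (_ : y ∈ Finset.univ) =>
          (Finset.sum_const (negMulLog ((1:ℝ)/9))), Finset.sum_const, Finset.card_univ, hA,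
          hn19, hlog9]
        simp only [nsmul_eq_mul]
        push_cast; ring
  have eX : entH μ X = Real.log 3 := by
    calc entH μ X = entH μ ((fun v : A × A × T => v.1) ∘ W) := rfl
      _ = ∑ x : A, negMulLog (∑ y, ∑ t, pm μ W (x, y, t)) := by
        rw [entH_comp μ W hW]
        exact Finset.sum_congr rfl fun x _ => by rw [marg_X (pm μ W) x]
      _ = ∑ x : A, negMulLog ((1:ℝ)/3) := by
        apply Finset.sum_congr rfl
        intro x _
        congr 1
        rw [Finset.sum_congr rfl fun y (_ : y ∈ Finset.univ) => hmarg x y,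
          Finset.sum_const, Finset.card_univ, hA]
        norm_num
      _ = Real.log 3 := by
        rw [Finset.sum_const, Finset.card_univ, hA, hn13]
        simp only [nsmul_eq_mul]
        push_cast; ring
  have eY : entH μ Y = Real.log 3 := by
    calc entH μ Y = entH μ ((fun v : A × A × T => v.2.1) ∘ W) := rfl
      _ = ∑ y : A, negMulLog (∑ x, ∑ t, pm μ W (x, y, t)) := by
        rw [entH_comp μ W hW]
        exact Finset.sum_congr rfl fun y _ => by rw [marg_Y (pm μ W) y]
      _ = ∑ y : A, negMulLog ((1:ℝ)/3) := by
        apply Finset.sum_congr rfl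
        intro y _
        congr 1
        rw [Finset.sum_congr rfl fun x (_ : x ∈ Finset.univ) => hmarg x y,
          Finset.sum_const, Finset.card_univ, hA]
        norm_num
      _ = Real.log 3 := by
        rw [Finset.sum_const, Finset.card_univ, hA, hn13]
        simp only [nsmul_eq_mul]
        push_cast; ring
  -- CMI = 0 in pmf form, factorization
  have hcmi : (∑ x : A, ∑ t : T, negMulLog (∑ y, pm μ W (x, y, t)))
      + (∑ y : A, ∑ t : T, negMulLog (∑ x, pm μ W (x, y, t)))
      - (∑ x : A, ∑ y : A, ∑ t : T, negMulLog (pm μ W (x, y, t)))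
      - (∑ t : T, negMulLog (∑ x, ∑ y, pm μ W (x, y, t))) = 0 := by
    have h := hXY
    simp only [condMutInf] at h
    rw [eXM, eYM, eXYM, eM] at h
    exact h
  have hfact := fact_of_cmi_zero (fun x y t => pm μ W (x, y, t))
    (fun x y t => hqnn (x, y, t)) hcmi
  -- determinism from H(Z | M,X) = 0
  have hdetx : ∀ x t, pm μ W (x, x, t) = 0 ∨ pm μ W (x, x, t) = ∑ y, pm μ W (x, y, t) := by
    have eZMX : entH μ (fun ω => ((if X ω = Y ω then (1 : Fin 2) else 0), (M ω, X ω)))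
        = ∑ z : Fin 2, ∑ w : T × A, negMulLog
            (∑ y, if (if w.2 = y then (1 : Fin 2) else 0) = z then pm μ W (w.2, y, w.1) else 0) := by
      calc entH μ (fun ω => ((if X ω = Y ω then (1 : Fin 2) else 0), (M ω, X ω)))
          = entH μ ((fun v : A × A × T =>
              ((if v.1 = v.2.1 then (1 : Fin 2) else 0), (v.2.2, v.1))) ∘ W) := rfl
        _ = _ := by
          rw [entH_comp μ W hW, Fintype.sum_prod_type]
          exact Finset.sum_congr rfl fun z _ => Finset.sum_congr rfl fun w _ => by
            rw [marg_ZMX (pm μ W) z w]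
    have eMXw : entH μ (fun ω => (M ω, X ω))
        = ∑ w : T × A, negMulLog (∑ y, pm μ W (w.2, y, w.1)) := by
      calc entH μ (fun ω => (M ω, X ω))
          = entH μ ((fun v : A × A × T => (v.2.2, v.1)) ∘ W) := rfl
        _ = _ := by
          rw [entH_comp μ W hW]
          exact Finset.sum_congr rfl fun w _ => by rw [marg_MXw (pm μ W) w]
    have hQs : ∀ w : T × A, (∑ z : Fin 2,
        ∑ y, if (if w.2 = y then (1 : Fin 2) else 0) = z then pm μ W (w.2, y, w.1) else 0)
        = ∑ y, pm μ W (w.2, y, w.1) := by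
      intro w
      rw [Finset.sum_comm]
      exact Finset.sum_congr rfl fun y _ => by
        rw [Finset.sum_ite_eq]
        simp
    have h0 : (∑ z : Fin 2, ∑ w : T × A, negMulLog
          (∑ y, if (if w.2 = y then (1 : Fin 2) else 0) = z then pm μ W (w.2, y, w.1) else 0))
        - (∑ w : T × A, negMulLog (∑ z : Fin 2,
            ∑ y, if (if w.2 = y then (1 : Fin 2) else 0) = z then pm μ W (w.2, y, w.1) else 0))
        = 0 := by
      have h := hZX
      simp only [condEnt] at h
      rw [eZMX, eMXw] at h
      rw [Finset.sum_congr rfl fun w (_ : w ∈ Finset.univ) => congrArg negMulLog (hQs w)]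
      exact h
    have hdet := det_of_condEnt_zero
      (fun z (w : T × A) =>
        ∑ y, if (if w.2 = y then (1 : Fin 2) else 0) = z then pm μ W (w.2, y, w.1) else 0)
      (fun z w => Finset.sum_nonneg fun y _ => by
        by_cases hc : (if w.2 = y then (1 : Fin 2) else 0) = z
        · simpa [hc] using hqnn (w.2, y, w.1)
        · simp [hc]) h0
    intro x t
    have h := hdet 1 (t, x)
    simp only at h
    have c1 : (∑ y, if (if x = y then (1 : Fin 2) else 0) = 1 then pm μ W (x, y, t) else 0)
        = pm μ W (x, x, t) := by
      have hc : ∀ y : A, ((if x = y then (1 : Fin 2) else 0) = 1) = (x = y) := by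
        intro y; by_cases hxy : x = y <;> simp [hxy]
      simp only [hc]
      rw [Finset.sum_ite_eq]
      simp
    rw [c1, hQs (t, x)] at h
    exact h
  -- determinism from H(Z | M,Y) = 0
  have hdety : ∀ y t, pm μ W (y, y, t) = 0 ∨ pm μ W (y, y, t) = ∑ x, pm μ W (x, y, t) := by
    have eZMY : entH μ (fun ω => ((if X ω = Y ω then (1 : Fin 2) else 0), (M ω, Y ω)))
        = ∑ z : Fin 2, ∑ w : T × A, negMulLog
            (∑ x, if (if x = w.2 then (1 : Fin 2) else 0) = z then pm μ W (x, w.2, w.1) else 0) := by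
      calc entH μ (fun ω => ((if X ω = Y ω then (1 : Fin 2) else 0), (M ω, Y ω)))
          = entH μ ((fun v : A × A × T =>
              ((if v.1 = v.2.1 then (1 : Fin 2) else 0), (v.2.2, v.2.1))) ∘ W) := rfl
        _ = _ := by
          rw [entH_comp μ W hW, Fintype.sum_prod_type]
          exact Finset.sum_congr rfl fun z _ => Finset.sum_congr rfl fun w _ => by
            rw [marg_ZMY (pm μ W) z w]
    have eMYw : entH μ (fun ω => (M ω, Y ω))
        = ∑ w : T × A, negMulLog (∑ x, pm μ W (x, w.2, w.1)) := by
      calc entH μ (fun ω => (M ω, Y ω))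
          = entH μ ((fun v : A × A × T => (v.2.2, v.2.1)) ∘ W) := rfl
        _ = _ := by
          rw [entH_comp μ W hW]
          exact Finset.sum_congr rfl fun w _ => by rw [marg_MYw (pm μ W) w]
    have hQs : ∀ w : T × A, (∑ z : Fin 2,
        ∑ x, if (if x = w.2 then (1 : Fin 2) else 0) = z then pm μ W (x, w.2, w.1) else 0)
        = ∑ x, pm μ W (x, w.2, w.1) := by
      intro w
      rw [Finset.sum_comm]
      exact Finset.sum_congr rfl fun x _ => by
        rw [Finset.sum_ite_eq]
        simp
    have h0 : (∑ z : Fin 2, ∑ w : T × A, negMulLog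
          (∑ x, if (if x = w.2 then (1 : Fin 2) else 0) = z then pm μ W (x, w.2, w.1) else 0))
        - (∑ w : T × A, negMulLog (∑ z : Fin 2,
            ∑ x, if (if x = w.2 then (1 : Fin 2) else 0) = z then pm μ W (x, w.2, w.1) else 0))
        = 0 := by
      have h := hZY
      simp only [condEnt] at h
      rw [eZMY, eMYw] at h
      rw [Finset.sum_congr rfl fun w (_ : w ∈ Finset.univ) => congrArg negMulLog (hQs w)]
      exact h
    have hdet := det_of_condEnt_zero
      (fun z (w : T × A) =>
        ∑ x, if (if x = w.2 then (1 : Fin 2) else 0) = z then pm μ W (x, w.2, w.1) else 0)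
      (fun z w => Finset.sum_nonneg fun x _ => by
        by_cases hc : (if x = w.2 then (1 : Fin 2) else 0) = z
        · simpa [hc] using hqnn (x, w.2, w.1)
        · simp [hc]) h0
    intro y t
    have h := hdet 1 (t, y)
    simp only at h
    have c1 : (∑ x, if (if x = y then (1 : Fin 2) else 0) = 1 then pm μ W (x, y, t) else 0)
        = pm μ W (y, y, t) := by
      have hc : ∀ x : A, ((if x = y then (1 : Fin 2) else 0) = 1) = (x = y) := by
        intro x; by_cases hxy : x = y <;> simp [hxy]
      simp only [hc]
      rw [Finset.sum_ite_eq']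
      simp
    rw [c1, hQs (t, y)] at h
    exact h
  -- core bound and final assembly
  have hcore := core_bound hA (fun x y t => pm μ W (x, y, t))
    (fun x y t => hqnn (x, y, t)) hfact hdetx hdety hmarg
  simp only [condMutInf]
  rw [eXY, eMY, eXMY, eY, eYX, eMX, eYMX, eX]
  linarith [hcore, hcmi]
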